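/- Let K(t) = sec t + tan t. Then K'''(t) − (t·K(t))'' = (3 sin t − t cos t)/(1 − sin t)², as functions on the domain where cos t ≠ 0. This is the exponential generating function of the numbers K_n^2 = K_{n+3} − (n+2)K_{n+1}. -/

import Mathlib

open Real Filter

noncomputable def Kg1 (s : ℝ) : ℝ := (1 + Real.sin s) / Real.cos s ^ 2
noncomputable def Kg2 (s : ℝ) : ℝ := (1 + Real.sin s) ^ 2 / Real.cos s ^ 3
noncomputable def Kg3 (s : ℝ) : ℝ :=
  (1 + Real.sin s) ^ 2 * (2 + Real.sin s) / Real.cos s ^ 4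

lemma pyth (s : ℝ) : Real.sin s ^ 2 + Real.cos s ^ 2 = 1 := Real.sin_sq_add_cos_sq s

lemma hdf (s : ℝ) (hs : Real.cos s ≠ 0) :
    HasDerivAt (fun x : ℝ => 1 / Real.cos x + Real.tan x) (Kg1 s) s := by
  have h1 : HasDerivAt (fun x : ℝ => 1 / Real.cos x)
      ((0 * Real.cos s - 1 * (-Real.sin s)) / Real.cos s ^ 2) s :=
    (hasDerivAt_const s (1:ℝ)).div (Real.hasDerivAt_cos s) hs
  have h2 := Real.hasDerivAt_tan hs
  have h3 := h1.add h2
  refine h3.congr_deriv (Eq.symm ?_)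
  unfold Kg1; field_simp; ring

lemma hdg1 (s : ℝ) (hs : Real.cos s ≠ 0) : HasDerivAt Kg1 (Kg2 s) s := by
  have h1 : HasDerivAt (fun x : ℝ => (1 + Real.sin x) / Real.cos x ^ 2)
      (((0 + Real.cos s) * Real.cos s ^ 2 - (1 + Real.sin s) * ((2:ℕ) * Real.cos s ^ (2 - 1) * (-Real.sin s)))
        / (Real.cos s ^ 2) ^ 2) s :=
    ((hasDerivAt_const s (1:ℝ)).add (Real.hasDerivAt_sin s)).div
      ((Real.hasDerivAt_cos s).pow 2) (pow_ne_zero 2 hs)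
  refine h1.congr_deriv (Eq.symm ?_)
  unfold Kg2
  have h := pyth s
  field_simp
  linear_combination (-(Real.cos s)) * h

lemma hdg2 (s : ℝ) (hs : Real.cos s ≠ 0) : HasDerivAt Kg2 (Kg3 s) s := by
  have h1 : HasDerivAt (fun x : ℝ => (1 + Real.sin x) ^ 2 / Real.cos x ^ 3)
      (((2:ℕ) * (1 + Real.sin s) ^ (2 - 1) * (0 + Real.cos s) * Real.cos s ^ 3
          - (1 + Real.sin s) ^ 2 * ((3:ℕ) * Real.cos s ^ (3 - 1) * (-Real.sin s)))
        / (Real.cos s ^ 3) ^ 2) s :=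
    (((hasDerivAt_const s (1:ℝ)).add (Real.hasDerivAt_sin s)).pow 2).div
      ((Real.hasDerivAt_cos s).pow 3) (pow_ne_zero 3 hs)
  refine h1.congr_deriv (Eq.symm ?_)
  unfold Kg3
  have h := pyth s
  field_simp
  linear_combination (-2 * Real.cos s ^ 2 * (1 + Real.sin s)) * h

theorem egf_K_two_boundary_points :
    ∀ t : ℝ, Real.cos t ≠ 0 →
      iteratedDeriv 3 (fun s : ℝ => 1 / Real.cos s + Real.tan s) t
        - iteratedDeriv 2 (fun s : ℝ => s * (1 / Real.cos s + Real.tan s)) t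
      = (3 * Real.sin t - t * Real.cos t) / (1 - Real.sin t) ^ 2 := by
  intro t ht
  set f : ℝ → ℝ := fun s => 1 / Real.cos s + Real.tan s with hf
  set U : Set ℝ := {s | Real.cos s ≠ 0} with hUdef
  have hU : IsOpen U := isOpen_compl_singleton.preimage Real.continuous_cos
  have htU : t ∈ U := ht
  have hmem : U ∈ nhds t := hU.mem_nhds htU
  -- first derivative of f equals Kg1 on U
  have e1 : ∀ s ∈ U, deriv f s = Kg1 s := fun s hs => (hdf s hs).deriv
  have e2 : ∀ s ∈ U, deriv (deriv f) s = Kg2 s := by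
    intro s hs
    have : deriv f =ᶠ[nhds s] Kg1 :=
      Filter.eventually_of_mem (hU.mem_nhds hs) e1
    rw [this.deriv_eq, (hdg1 s hs).deriv]
  have e3 : deriv (deriv (deriv f)) t = Kg3 t := by
    have : deriv (deriv f) =ᶠ[nhds t] Kg2 :=
      Filter.eventually_of_mem hmem e2
    rw [this.deriv_eq, (hdg2 t ht).deriv]
  -- derivatives of h = s * f s
  set h : ℝ → ℝ := fun s => s * f s with hh
  have hdh : ∀ s ∈ U, HasDerivAt h (1 * f s + s * Kg1 s) s := fun s hs =>
    (hasDerivAt_id s).mul (hdf s hs)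
  have e1' : ∀ s ∈ U, deriv h s = f s + s * Kg1 s := by
    intro s hs; rw [(hdh s hs).deriv]; ring
  have e2' : deriv (deriv h) t = Kg1 t + (1 * Kg1 t + t * Kg2 t) := by
    have heq : deriv h =ᶠ[nhds t] fun s => f s + s * Kg1 s :=
      Filter.eventually_of_mem hmem e1'
    rw [heq.deriv_eq]
    exact (((hdf t ht).add ((hasDerivAt_id t).mul (hdg1 t ht)))).deriv
  have i3 : iteratedDeriv 3 f t = deriv (deriv (deriv f)) t := by
    rw [iteratedDeriv_succ, iteratedDeriv_succ, iteratedDeriv_one]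
  have i2 : iteratedDeriv 2 h t = deriv (deriv h) t := by
    rw [iteratedDeriv_succ, iteratedDeriv_one]
  rw [i3, i2, e3, e2']
  unfold Kg1 Kg2 Kg3
  have hsin : Real.sin t ≠ 1 := by
    intro hst
    have := pyth t
    rw [hst] at this
    simp at this
    exact ht (by nlinarith [this])
  have h1s : (1 : ℝ) - Real.sin t ≠ 0 := sub_ne_zero.mpr (Ne.symm hsin)
  have h := pyth t
  field_simp
  linear_combination (-(Real.cos t ^ 2 + 1 - Real.sin t ^ 2) * (3 * Real.sin t - Real.cos t * t)
    - 2 * (1 + Real.sin t) * (1 - Real.sin t) ^ 2) * h
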